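/- Let D_1, …, D_{n−t} be the groups present after t merging steps of the single-linkage algorithm on (X, dist) (where 0 ≤ t ≤ n−2), and let D_a, D_b be the pair among them with minimum spacing. Let C* be any clustering of X into at least two groups with Min-Sp(C*) > spacing(D_a, D_b). Then every group D_i (i = 1, …, n−t) is contained in a single group of C*, and moreover D_a ∪ D_b is contained in a single group of C*. -/

import Mathlib

open scoped Classical

namespace ClusterSpacing

variable {X : Type*}

/-- The spacing between two groups: the minimum (infimum) distance between a
point of `A` and a point of `B`. -/
noncomputable def spacing (dist : X → X → ℝ) (A B : Set X) : ℝ :=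
  sInf {d : ℝ | ∃ x ∈ A, ∃ y ∈ B, d = dist x y}

/-- The weight of an (unordered) edge between two groups. For symmetric `dist`
this coincides with `spacing`. -/
noncomputable def edgeWeight (dist : X → X → ℝ) : Sym2 (Set X) → ℝ :=
  Sym2.lift ⟨fun A B =>
    sInf ({d : ℝ | ∃ x ∈ A, ∃ y ∈ B, d = dist x y} ∪
          {d : ℝ | ∃ x ∈ B, ∃ y ∈ A, d = dist x y}),
    fun A B => by beta_reduce; rw [Set.union_comm]⟩

/-- A clustering of `X`: a partition of `X` into nonempty groups. -/
def IsClustering (𝒞 : Set (Set X)) : Prop :=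
  (∀ A ∈ 𝒞, A.Nonempty) ∧ ⋃₀ 𝒞 = Set.univ ∧
    ∀ A ∈ 𝒞, ∀ B ∈ 𝒞, A ≠ B → Disjoint A B

/-- The minimum spacing of a clustering: the minimum spacing over pairs of
distinct groups. -/
noncomputable def MinSp (dist : X → X → ℝ) (𝒞 : Set (Set X)) : ℝ :=
  sInf {d : ℝ | ∃ A ∈ 𝒞, ∃ B ∈ 𝒞, A ≠ B ∧ d = spacing dist A B}

/-- Total weight of (the edges of) a graph on the groups of a clustering. -/
noncomputable def treeCost (dist : X → X → ℝ) (𝒞 : Set (Set X))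
    (T : SimpleGraph {A : Set X // A ∈ 𝒞}) : ℝ :=
  ∑ᶠ e ∈ T.edgeSet, edgeWeight dist (Sym2.map Subtype.val e)

/-- The MST spacing of a clustering: the minimum, over all spanning trees of the
complete graph on the groups, of the total edge weight. -/
noncomputable def MSTSp (dist : X → X → ℝ) (𝒞 : Set (Set X)) : ℝ :=
  sInf {c : ℝ | ∃ T : SimpleGraph {A : Set X // A ∈ 𝒞}, T.IsTree ∧ treeCost dist 𝒞 T = c}

/-- `T` is a minimum spanning tree of the complete graph `G_𝒞` on the groups of `𝒞`. -/
def IsMST (dist : X → X → ℝ) (𝒞 : Set (Set X))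
    (T : SimpleGraph {A : Set X // A ∈ 𝒞}) : Prop :=
  T.IsTree ∧ ∀ T' : SimpleGraph {A : Set X // A ∈ 𝒞}, T'.IsTree →
    treeCost dist 𝒞 T ≤ treeCost dist 𝒞 T'

/-- `SingleLinkage dist t 𝒟` holds iff `𝒟` is the collection of groups present
after `t` merging steps of the single-linkage algorithm. -/
inductive SingleLinkage (dist : X → X → ℝ) : ℕ → Set (Set X) → Prop
  | zero : SingleLinkage dist 0 {A : Set X | ∃ x : X, A = {x}}
  | succ (t : ℕ) (𝒟 : Set (Set X)) (A B : Set X) :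
      SingleLinkage dist t 𝒟 → A ∈ 𝒟 → B ∈ 𝒟 → A ≠ B →
      (∀ A' ∈ 𝒟, ∀ B' ∈ 𝒟, A' ≠ B' → spacing dist A B ≤ spacing dist A' B') →
      SingleLinkage dist (t + 1) (insert (A ∪ B) (𝒟 \ {A, B}))

/-- The list of edge weights of a graph on the groups of a clustering, sorted
in nondecreasing order. -/
noncomputable def edgeWeightsSorted [Fintype X] (dist : X → X → ℝ) (𝒞 : Set (Set X))
    (T : SimpleGraph {A : Set X // A ∈ 𝒞}) : List ℝ :=
  Multiset.sort
    ((T.edgeSet.toFinite.toFinset.val).map (fun e => edgeWeight dist (Sym2.map Subtype.val e))) (· ≤ ·)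

section Aux

lemma spacingSet_finite [Finite X] (dist : X → X → ℝ) (A B : Set X) :
    {d : ℝ | ∃ x ∈ A, ∃ y ∈ B, d = dist x y}.Finite := by
  apply Set.Finite.subset (Set.finite_range (fun p : X × X => dist p.1 p.2))
  rintro d ⟨x, hx, y, hy, rfl⟩
  exact ⟨(x, y), rfl⟩

lemma spacing_le [Finite X] (dist : X → X → ℝ) {A B : Set X} {x y : X}
    (hx : x ∈ A) (hy : y ∈ B) : spacing dist A B ≤ dist x y :=
  csInf_le (spacingSet_finite dist A B).bddBelow ⟨x, hx, y, hy, rfl⟩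

lemma spacing_attained [Finite X] (dist : X → X → ℝ) {A B : Set X}
    (hA : A.Nonempty) (hB : B.Nonempty) :
    ∃ x ∈ A, ∃ y ∈ B, spacing dist A B = dist x y := by
  have hne : {d : ℝ | ∃ x ∈ A, ∃ y ∈ B, d = dist x y}.Nonempty :=
    ⟨dist hA.choose hB.choose, hA.choose, hA.choose_spec, hB.choose, hB.choose_spec, rfl⟩
  exact hne.csInf_mem (spacingSet_finite dist A B)

lemma sl_nonempty [Nonempty X] {dist : X → X → ℝ} {t : ℕ} {𝒟 : Set (Set X)}
    (h : SingleLinkage dist t 𝒟) : ∀ D ∈ 𝒟, D.Nonempty := by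
  induction h with
  | zero => rintro D ⟨x, rfl⟩; exact ⟨x, rfl⟩
  | succ t 𝒟 A B h hA hB hne hmin ih =>
      rintro D hD
      rcases Set.mem_insert_iff.1 hD with rfl | hD'
      · exact (ih A hA).mono Set.subset_union_left
      · exact ih D hD'.1

lemma sl_chain [Finite X] [Nonempty X] {dist : X → X → ℝ}
    (hsymm : ∀ x y : X, dist x y = dist y x) {t : ℕ} {𝒟 : Set (Set X)}
    (h : SingleLinkage dist t 𝒟) (d : ℝ) :
    (∃ A ∈ 𝒟, ∃ B ∈ 𝒟, A ≠ B ∧ spacing dist A B ≤ d) →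
    ∀ D ∈ 𝒟, ∀ x ∈ D, ∀ y ∈ D, Relation.ReflTransGen (fun a b => dist a b ≤ d) x y := by
  induction h with
  | zero =>
      rintro - D ⟨x, rfl⟩ a ha b hb
      rw [Set.mem_singleton_iff] at ha hb
      subst ha; subst hb
      exact Relation.ReflTransGen.refl
  | succ s 𝒟 A B hsl hA hB hAB hmin ih =>
      rintro ⟨P, hP, Q, hQ, hPQ, hle⟩
      -- Show the merge spacing is at most d (monotonicity of minimum spacing).
      have hABd : spacing dist A B ≤ d := by
        rcases Set.mem_insert_iff.1 hP with rfl | hP'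
        · -- P = A ∪ B
          rcases Set.mem_insert_iff.1 hQ with rfl | hQ'
          · exact absurd rfl hPQ
          · obtain ⟨x, hx, y, hy, hxy⟩ :=
              spacing_attained dist
                ((sl_nonempty hsl A hA).mono Set.subset_union_left)
                (sl_nonempty hsl Q hQ'.1)
            rcases hx with hx | hx
            · have h1 : spacing dist A Q ≤ dist x y := spacing_le dist hx hy
              have h2 : spacing dist A B ≤ spacing dist A Q :=
                hmin A hA Q hQ'.1 (fun hEq => hQ'.2 (by simp [← hEq]))
              calc spacing dist A B ≤ spacing dist A Q := h2
                _ ≤ dist x y := h1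
                _ = spacing dist (A ∪ B) Q := hxy.symm
                _ ≤ d := hle
            · have h1 : spacing dist B Q ≤ dist x y := spacing_le dist hx hy
              have h2 : spacing dist A B ≤ spacing dist B Q :=
                hmin B hB Q hQ'.1 (fun hEq => hQ'.2 (by simp [← hEq]))
              calc spacing dist A B ≤ spacing dist B Q := h2
                _ ≤ dist x y := h1
                _ = spacing dist (A ∪ B) Q := hxy.symm
                _ ≤ d := hle
        · rcases Set.mem_insert_iff.1 hQ with rfl | hQ'
          · obtain ⟨x, hx, y, hy, hxy⟩ :=
              spacing_attained dist (sl_nonempty hsl P hP'.1)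
                ((sl_nonempty hsl A hA).mono Set.subset_union_left)
            rcases hy with hy | hy
            · have h1 : spacing dist P A ≤ dist x y := spacing_le dist hx hy
              have h2 : spacing dist A B ≤ spacing dist P A :=
                hmin P hP'.1 A hA (fun hEq => hP'.2 (by simp [hEq]))
              calc spacing dist A B ≤ spacing dist P A := h2
                _ ≤ dist x y := h1
                _ = spacing dist P (A ∪ B) := hxy.symm
                _ ≤ d := hle
            · have h1 : spacing dist P B ≤ dist x y := spacing_le dist hx hy
              have h2 : spacing dist A B ≤ spacing dist P B :=
                hmin P hP'.1 B hB (fun hEq => hP'.2 (by simp [hEq]))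
              calc spacing dist A B ≤ spacing dist P B := h2
                _ ≤ dist x y := h1
                _ = spacing dist P (A ∪ B) := hxy.symm
                _ ≤ d := hle
          · calc spacing dist A B ≤ spacing dist P Q := hmin P hP'.1 Q hQ'.1 hPQ
              _ ≤ d := hle
      have ih' := ih ⟨A, hA, B, hB, hAB, hABd⟩
      rintro D hD x hx y hy
      rcases Set.mem_insert_iff.1 hD with rfl | hD'
      · -- D = A ∪ B : connect through the realizing pair of spacing A B
        obtain ⟨x₀, hx₀, y₀, hy₀, hxy₀⟩ :=
          spacing_attained dist (sl_nonempty hsl A hA) (sl_nonempty hsl B hB)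
        have edge1 : Relation.ReflTransGen (fun a b => dist a b ≤ d) x₀ y₀ :=
          Relation.ReflTransGen.single (hxy₀ ▸ hABd)
        have edge2 : Relation.ReflTransGen (fun a b => dist a b ≤ d) y₀ x₀ :=
          Relation.ReflTransGen.single (by rw [hsymm]; exact hxy₀ ▸ hABd)
        rcases hx with hx | hx <;> rcases hy with hy | hy
        · exact ih' A hA x hx y hy
        · exact ((ih' A hA x hx x₀ hx₀).trans edge1).trans (ih' B hB y₀ hy₀ y hy)
        · exact ((ih' B hB x hx y₀ hy₀).trans edge2).trans (ih' A hA x₀ hx₀ y hy)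
        · exact ih' B hB x hx y hy
      · exact ih' D hD'.1 x hx y hy

end Aux

theorem singleLinkage_groups_refine_better_clustering {X : Type*} [Fintype X] (dist : X → X → ℝ)
    (hsymm : ∀ x y : X, dist x y = dist y x)
    (hpos : ∀ x y : X, x ≠ y → 0 < dist x y)
    (hdistinct : ∀ x y x' y' : X, x ≠ y → x' ≠ y' → dist x y = dist x' y' →
      (x = x' ∧ y = y') ∨ (x = y' ∧ y = x'))
    (t : ℕ) (ht : t ≤ Fintype.card X - 2)
    (𝒟 : Set (Set X)) (h𝒟 : SingleLinkage dist t 𝒟)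
    (Da Db : Set X) (hDa : Da ∈ 𝒟) (hDb : Db ∈ 𝒟) (hab : Da ≠ Db)
    (hminpair : ∀ A ∈ 𝒟, ∀ B ∈ 𝒟, A ≠ B → spacing dist Da Db ≤ spacing dist A B)
    (𝒞 : Set (Set X)) (h𝒞 : IsClustering 𝒞) (h𝒞2 : 2 ≤ 𝒞.ncard)
    (hgt : spacing dist Da Db < MinSp dist 𝒞) :
    (∀ D ∈ 𝒟, ∃ C ∈ 𝒞, D ⊆ C) ∧ (∃ C ∈ 𝒞, Da ∪ Db ⊆ C) := by
  have hXne : Nonempty X := by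
    obtain ⟨C, hC⟩ : 𝒞.Nonempty := Set.nonempty_of_ncard_ne_zero (by omega)
    obtain ⟨x, -⟩ := h𝒞.1 C hC
    exact ⟨x⟩
  set d := spacing dist Da Db with hd
  have hbdd : BddBelow {r : ℝ | ∃ A ∈ 𝒞, ∃ B ∈ 𝒞, A ≠ B ∧ r = spacing dist A B} := by
    apply Set.Finite.bddBelow
    apply Set.Finite.subset (Set.finite_range (fun p : Set X × Set X => spacing dist p.1 p.2))
    rintro r ⟨A, -, B, -, -, rfl⟩
    exact ⟨(A, B), rfl⟩
  have hmemC : ∀ a : X, ∃ C ∈ 𝒞, a ∈ C := by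
    intro a
    have : a ∈ ⋃₀ 𝒞 := by rw [h𝒞.2.1]; trivial
    exact Set.mem_sUnion.1 this
  have step : ∀ a b : X, dist a b ≤ d → ∀ C ∈ 𝒞, a ∈ C → b ∈ C := by
    intro a b hab C hC haC
    obtain ⟨C', hC', hbC'⟩ := hmemC b
    by_cases hCC : C = C'
    · exact hCC ▸ hbC'
    · exfalso
      have h1 : MinSp dist 𝒞 ≤ spacing dist C C' := csInf_le hbdd ⟨C, hC, C', hC', hCC, rfl⟩
      have h2 : spacing dist C C' ≤ dist a b := spacing_le dist haC hbC'
      have : MinSp dist 𝒞 ≤ d := le_trans h1 (le_trans h2 hab)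
      exact absurd hgt (not_lt.2 this)
  have chainstep : ∀ a b : X, Relation.ReflTransGen (fun a b => dist a b ≤ d) a b →
      ∀ C ∈ 𝒞, a ∈ C → b ∈ C := by
    intro a b hab C hC haC
    induction hab with
    | refl => exact haC
    | tail _ h ih => exact step _ _ h C hC ih
  have hchain := sl_chain hsymm h𝒟 d ⟨Da, hDa, Db, hDb, hab, le_refl d⟩
  constructor
  · intro D hD
    obtain ⟨x, hx⟩ := sl_nonempty h𝒟 D hD
    obtain ⟨C, hC, hxC⟩ := hmemC x
    exact ⟨C, hC, fun y hy => chainstep x y (hchain D hD x hx y hy) C hC hxC⟩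
  · obtain ⟨x₀, hx₀, y₀, hy₀, hxy₀⟩ :=
      spacing_attained dist (sl_nonempty h𝒟 Da hDa) (sl_nonempty h𝒟 Db hDb)
    obtain ⟨C, hC, hxC⟩ := hmemC x₀
    refine ⟨C, hC, ?_⟩
    rintro z (hz | hz)
    · exact chainstep x₀ z (hchain Da hDa x₀ hx₀ z hz) C hC hxC
    · have hy₀C : y₀ ∈ C := step x₀ y₀ (le_of_eq hxy₀.symm) C hC hxC
      exact chainstep y₀ z (hchain Db hDb y₀ hy₀ z hz) C hC hy₀C

end ClusterSpacing
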